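/- Let n ≥ 1 and for symmetric C, D ∈ ℝ^{n×n} define OGW(C,D) := (1/n²)·(‖C‖_F² + ‖D‖_F² − 2·sup_{P ∈ O_n ∩ E_n} tr(C P D Pᵀ)), where O_n := {P ∈ ℝ^{n×n} : Pᵀ P = I} and E_n := {P ∈ ℝ^{n×n} : P·1 = Pᵀ·1 = 1}. Then for all symmetric C, D, E ∈ ℝ^{n×n}, √(OGW(C,E)) ≤ √(OGW(C,D)) + √(OGW(D,E)). -/
import Mathlib


open Matrix BigOperators

noncomputable section

/-- Squared Frobenius norm of a real matrix. -/
def frobSq {m n : ℕ} (A : Matrix (Fin m) (Fin n) ℝ) : ℝ := ∑ i, ∑ j, (A i j) ^ 2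

/-- Euclidean norm of a real vector. -/
def vnorm {n : ℕ} (v : Fin n → ℝ) : ℝ := Real.sqrt (∑ i, (v i) ^ 2)

/-- Eigenvalues of a real symmetric (Hermitian) matrix, listed in descending order. -/
def eigDesc {n : ℕ} {A : Matrix (Fin n) (Fin n) ℝ} (hA : A.IsHermitian) : Fin n → ℝ :=
  fun i => (hA.eigenvalues ∘ Tuple.sort hA.eigenvalues) i.rev

/-- Conjugating a real symmetric (Hermitian) matrix preserves symmetry. -/
theorem conjHerm {n m : ℕ} (V : Matrix (Fin n) (Fin m) ℝ) {C : Matrix (Fin n) (Fin n) ℝ}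
    (hC : C.IsHermitian) : (Vᵀ * C * V).IsHermitian := by
  have h := Matrix.isHermitian_mul_mul_conjTranspose Vᵀ hC
  simpa using h


/-- The set `O_n ∩ E_n` of orthogonal matrices whose row and column sums all equal `1`. -/
def OE (n : ℕ) : Set (Matrix (Fin n) (Fin n) ℝ) :=
  {P | Pᵀ * P = 1 ∧ (P *ᵥ (fun _ => (1 : ℝ)) = fun _ => 1)
    ∧ (Pᵀ *ᵥ (fun _ => (1 : ℝ)) = fun _ => 1)}

/-- The orthogonal Gromov-Wasserstein discrepancy `OGW`. -/
def OGW (n : ℕ) (C D : Matrix (Fin n) (Fin n) ℝ) : ℝ :=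
  (1 / (n : ℝ) ^ 2) * (frobSq C + frobSq D
    - 2 * sSup ((fun P => Matrix.trace (C * P * D * Pᵀ)) '' (OE n)))

/- ### Auxiliary lemmas -/

lemma frobSq_nonneg {n : ℕ} (A : Matrix (Fin n) (Fin n) ℝ) : 0 ≤ frobSq A := by
  apply Finset.sum_nonneg; intro i _; apply Finset.sum_nonneg; intro j _; positivity

lemma frobSq_eq_trace {n : ℕ} (A : Matrix (Fin n) (Fin n) ℝ) :
    frobSq A = Matrix.trace (A * Aᵀ) := by
  simp [frobSq, Matrix.trace, Matrix.mul_apply, Matrix.diag, sq]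

/-- Embedding of matrices into Euclidean space. -/
def emb {n : ℕ} (A : Matrix (Fin n) (Fin n) ℝ) : EuclideanSpace ℝ (Fin n × Fin n) :=
  (WithLp.equiv 2 _).symm (fun p : Fin n × Fin n => A p.1 p.2)

lemma norm_emb {n : ℕ} (A : Matrix (Fin n) (Fin n) ℝ) :
    ‖emb A‖ = Real.sqrt (frobSq A) := by
  rw [EuclideanSpace.norm_eq]
  congr 1
  rw [frobSq, Fintype.sum_prod_type]
  simp [emb, Real.norm_eq_abs, sq_abs]

lemma sqrt_frobSq_add {n : ℕ} (M N : Matrix (Fin n) (Fin n) ℝ) :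
    Real.sqrt (frobSq (M + N)) ≤ Real.sqrt (frobSq M) + Real.sqrt (frobSq N) := by
  have h : emb (M + N) = emb M + emb N := by
    ext p; simp [emb, Matrix.add_apply]
  rw [← norm_emb, ← norm_emb, ← norm_emb, h]
  exact norm_add_le _ _

lemma frobSq_mul_orth {n : ℕ} (M Q : Matrix (Fin n) (Fin n) ℝ) (hQ : Qᵀ * Q = 1) :
    frobSq (M * Q) = frobSq M := by
  have h2 : Q * Qᵀ = 1 := mul_eq_one_comm.mp hQ
  rw [frobSq_eq_trace, frobSq_eq_trace, Matrix.transpose_mul,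
    show M * Q * (Qᵀ * Mᵀ) = M * (Q * Qᵀ) * Mᵀ by noncomm_ring, h2, Matrix.mul_one]

lemma frobSq_orth_mul {n : ℕ} (P M : Matrix (Fin n) (Fin n) ℝ) (hP : Pᵀ * P = 1) :
    frobSq (P * M) = frobSq M := by
  rw [frobSq_eq_trace, frobSq_eq_trace, Matrix.transpose_mul,
    show P * M * (Mᵀ * Pᵀ) = P * (M * Mᵀ * Pᵀ) by noncomm_ring,
    Matrix.trace_mul_comm,
    show M * Mᵀ * Pᵀ * P = M * Mᵀ * (Pᵀ * P) by noncomm_ring, hP, Matrix.mul_one]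

lemma key_identity {n : ℕ} (C D P : Matrix (Fin n) (Fin n) ℝ)
    (hC : Cᵀ = C) (hD : Dᵀ = D) (hP : Pᵀ * P = 1) :
    frobSq (C * P - P * D) = frobSq C + frobSq D - 2 * Matrix.trace (C * P * D * Pᵀ) := by
  have h2 : P * Pᵀ = 1 := mul_eq_one_comm.mp hP
  rw [frobSq_eq_trace, frobSq_eq_trace, frobSq_eq_trace]
  rw [Matrix.transpose_sub, Matrix.transpose_mul, Matrix.transpose_mul, hC, hD]
  rw [show (C * P - P * D) * (Pᵀ * C - D * Pᵀ)
      = C * (P * Pᵀ) * C - C * P * D * Pᵀ - P * D * Pᵀ * C + P * (D * D * Pᵀ) by noncomm_ring]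
  rw [h2, Matrix.mul_one]
  rw [Matrix.trace_add, Matrix.trace_sub, Matrix.trace_sub]
  rw [Matrix.trace_mul_comm (P * D * Pᵀ) C,
      show C * (P * D * Pᵀ) = C * P * D * Pᵀ by noncomm_ring,
      Matrix.trace_mul_comm P (D * D * Pᵀ),
      show D * D * Pᵀ * P = D * D * (Pᵀ * P) by noncomm_ring, hP, Matrix.mul_one]
  have hCC : Matrix.trace (C * C) = Matrix.trace (C * Cᵀ) := by rw [hC]
  have hDD : Matrix.trace (D * D) = Matrix.trace (D * Dᵀ) := by rw [hD]
  rw [hCC, hDD]; ring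

lemma one_mem_OE (n : ℕ) : (1 : Matrix (Fin n) (Fin n) ℝ) ∈ OE n := by
  refine ⟨?_, ?_, ?_⟩ <;> simp [OE, Matrix.transpose_one]

lemma mul_mem_OE {n : ℕ} {P Q : Matrix (Fin n) (Fin n) ℝ}
    (hP : P ∈ OE n) (hQ : Q ∈ OE n) : P * Q ∈ OE n := by
  obtain ⟨hP1, hP2, hP3⟩ := hP
  obtain ⟨hQ1, hQ2, hQ3⟩ := hQ
  refine ⟨?_, ?_, ?_⟩
  · rw [Matrix.transpose_mul, show Qᵀ * Pᵀ * (P * Q) = Qᵀ * (Pᵀ * P) * Q by noncomm_ring,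
      hP1, Matrix.mul_one, hQ1]
  · rw [← Matrix.mulVec_mulVec, hQ2, hP2]
  · rw [Matrix.transpose_mul, ← Matrix.mulVec_mulVec, hP3, hQ3]

lemma sqrt_add_le' (a b : ℝ) (ha : 0 ≤ a) (hb : 0 ≤ b) :
    Real.sqrt (a + b) ≤ Real.sqrt a + Real.sqrt b := by
  have h : a + b ≤ (Real.sqrt a + Real.sqrt b) ^ 2 := by
    rw [add_sq]
    nlinarith [Real.sq_sqrt ha, Real.sq_sqrt hb, Real.sqrt_nonneg a, Real.sqrt_nonneg b]
  calc Real.sqrt (a + b) ≤ Real.sqrt ((Real.sqrt a + Real.sqrt b) ^ 2) := Real.sqrt_le_sqrt h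
    _ = Real.sqrt a + Real.sqrt b := Real.sqrt_sq (by positivity)

/-- The set of traces over `OE n` is nonempty. -/
lemma traceSet_nonempty {n : ℕ} (C D : Matrix (Fin n) (Fin n) ℝ) :
    ((fun P => Matrix.trace (C * P * D * Pᵀ)) '' (OE n)).Nonempty :=
  ⟨_, ⟨1, one_mem_OE n, rfl⟩⟩

/-- The set of traces over `OE n` is bounded above for symmetric matrices. -/
lemma traceSet_bddAbove {n : ℕ} (C D : Matrix (Fin n) (Fin n) ℝ)
    (hC : Cᵀ = C) (hD : Dᵀ = D) :
    BddAbove ((fun P => Matrix.trace (C * P * D * Pᵀ)) '' (OE n)) := by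
  refine ⟨(frobSq C + frobSq D) / 2, ?_⟩
  rintro x ⟨P, hP, rfl⟩
  have hk := key_identity C D P hC hD hP.1
  have hnn := frobSq_nonneg (C * P - P * D)
  linarith

/-- The core (unscaled) triangle inequality. -/
lemma core_triangle {n : ℕ} (C D E : Matrix (Fin n) (Fin n) ℝ)
    (hC : Cᵀ = C) (hD : Dᵀ = D) (hE : Eᵀ = E) :
    Real.sqrt (frobSq C + frobSq E
        - 2 * sSup ((fun P => Matrix.trace (C * P * E * Pᵀ)) '' (OE n)))
      ≤ Real.sqrt (frobSq C + frobSq D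
        - 2 * sSup ((fun P => Matrix.trace (C * P * D * Pᵀ)) '' (OE n)))
      + Real.sqrt (frobSq D + frobSq E
        - 2 * sSup ((fun P => Matrix.trace (D * P * E * Pᵀ)) '' (OE n))) := by
  set sCD := sSup ((fun P => Matrix.trace (C * P * D * Pᵀ)) '' (OE n)) with hsCD
  set sDE := sSup ((fun P => Matrix.trace (D * P * E * Pᵀ)) '' (OE n)) with hsDE
  set sCE := sSup ((fun P => Matrix.trace (C * P * E * Pᵀ)) '' (OE n)) with hsCE
  set TCD := frobSq C + frobSq D - 2 * sCD with hTCD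
  set TDE := frobSq D + frobSq E - 2 * sDE with hTDE
  set TCE := frobSq C + frobSq E - 2 * sCE with hTCE
  have hTCDnn : 0 ≤ TCD := by
    have := csSup_le (traceSet_nonempty C D) (fun x hx => by
      obtain ⟨P, hP, rfl⟩ := hx
      have hk := key_identity C D P hC hD hP.1
      have hnn := frobSq_nonneg (C * P - P * D)
      linarith : ∀ x ∈ _, x ≤ (frobSq C + frobSq D) / 2)
    rw [hTCD]; linarith [this]
  have hTDEnn : 0 ≤ TDE := by
    have := csSup_le (traceSet_nonempty D E) (fun x hx => by
      obtain ⟨P, hP, rfl⟩ := hx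
      have hk := key_identity D E P hD hE hP.1
      have hnn := frobSq_nonneg (D * P - P * E)
      linarith : ∀ x ∈ _, x ≤ (frobSq D + frobSq E) / 2)
    rw [hTDE]; linarith [this]
  refine le_of_forall_pos_le_add ?_
  intro ε hε
  have hδ : (0:ℝ) < ε ^ 2 / 8 := by positivity
  set δ := ε ^ 2 / 8 with hδdef
  -- near-optimal P for (C, D)
  obtain ⟨x, hxmem, hxlt⟩ := exists_lt_of_lt_csSup (traceSet_nonempty C D)
    (show sCD - δ < sCD by linarith)
  obtain ⟨P, hP, rfl⟩ := hxmem
  -- near-optimal Q for (D, E)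
  obtain ⟨y, hymem, hylt⟩ := exists_lt_of_lt_csSup (traceSet_nonempty D E)
    (show sDE - δ < sDE by linarith)
  obtain ⟨Q, hQ, rfl⟩ := hymem
  have hPQ : P * Q ∈ OE n := mul_mem_OE hP hQ
  have h1 : Matrix.trace (C * (P * Q) * E * (P * Q)ᵀ) ≤ sCE :=
    le_csSup (traceSet_bddAbove C E hC hE) ⟨P * Q, hPQ, rfl⟩
  have k1 := key_identity C D P hC hD hP.1
  have k2 := key_identity D E Q hD hE hQ.1
  have k3 := key_identity C E (P * Q) hC hE hPQ.1
  -- decomposition and triangle inequality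
  have hdec : C * (P * Q) - (P * Q) * E = (C * P - P * D) * Q + P * (D * Q - Q * E) := by
    noncomm_ring
  have htri : Real.sqrt (frobSq (C * (P * Q) - (P * Q) * E))
      ≤ Real.sqrt (frobSq (C * P - P * D)) + Real.sqrt (frobSq (D * Q - Q * E)) := by
    rw [hdec]
    refine (sqrt_frobSq_add _ _).trans ?_
    rw [frobSq_mul_orth _ Q hQ.1, frobSq_orth_mul P _ hP.1]
  -- bounds on the two pieces
  have hu : Real.sqrt (frobSq (C * P - P * D)) ≤ Real.sqrt TCD + Real.sqrt (2 * δ) := by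
    have h2 : frobSq (C * P - P * D) ≤ TCD + 2 * δ := by rw [k1, hTCD]; linarith
    exact (Real.sqrt_le_sqrt h2).trans (sqrt_add_le' _ _ hTCDnn (by positivity))
  have hv : Real.sqrt (frobSq (D * Q - Q * E)) ≤ Real.sqrt TDE + Real.sqrt (2 * δ) := by
    have h2 : frobSq (D * Q - Q * E) ≤ TDE + 2 * δ := by rw [k2, hTDE]; linarith
    exact (Real.sqrt_le_sqrt h2).trans (sqrt_add_le' _ _ hTDEnn (by positivity))
  have hsqrtδ : Real.sqrt (2 * δ) = ε / 2 := by
    rw [show 2 * δ = (ε / 2) ^ 2 by rw [hδdef]; ring, Real.sqrt_sq (by linarith)]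
  -- chain it all together
  have hstart : Real.sqrt TCE ≤ Real.sqrt (frobSq (C * (P * Q) - (P * Q) * E)) := by
    apply Real.sqrt_le_sqrt
    rw [k3, hTCE]; linarith
  calc Real.sqrt TCE ≤ Real.sqrt (frobSq (C * (P * Q) - (P * Q) * E)) := hstart
    _ ≤ Real.sqrt (frobSq (C * P - P * D)) + Real.sqrt (frobSq (D * Q - Q * E)) := htri
    _ ≤ (Real.sqrt TCD + Real.sqrt (2 * δ)) + (Real.sqrt TDE + Real.sqrt (2 * δ)) :=
        add_le_add hu hv
    _ = Real.sqrt TCD + Real.sqrt TDE + ε := by rw [hsqrtδ]; ring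

/-- The square root of `OGW` satisfies the triangle inequality on symmetric matrices. -/
theorem OGW_sqrt_triangle (n : ℕ) (hn : 1 ≤ n)
    (C D E : Matrix (Fin n) (Fin n) ℝ)
    (hC : C.IsSymm) (hD : D.IsSymm) (hE : E.IsSymm) :
    Real.sqrt (OGW n C E) ≤ Real.sqrt (OGW n C D) + Real.sqrt (OGW n D E) := by
  have hsq : ∀ T : ℝ, Real.sqrt ((1 / (n : ℝ) ^ 2) * T)
      = (1 / (n : ℝ)) * Real.sqrt T := by
    intro T
    rw [show (1 / (n : ℝ) ^ 2) = (1 / (n : ℝ)) ^ 2 by ring, Real.sqrt_mul (sq_nonneg _),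
      Real.sqrt_sq (by positivity)]
  rw [OGW, OGW, OGW, hsq, hsq, hsq, ← mul_add]
  exact mul_le_mul_of_nonneg_left (core_triangle C D E hC hD hE) (by positivity)

end
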